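/- Suppose real numbers v, e1, e2, e3, q1, q2, q3, n satisfy the eight MMR equations a_k = n·p_k(v, e, q). Then for each i ∈ {1,2,3}, both x = e_i and x = q_i satisfy the quadratic equation (det A_Σ(i))·x² − (det A_Σ(i) + det A_+(i) − det A_−(i))·x + det A_+(i) = 0, where the matrices are built from the a_k. -/
import Mathlib


theorem e_and_q_satisfy_quadratic (a0 a1 a2 a3 a4 a5 a6 a7 : ℝ)
    (v e1 e2 e3 q1 q2 q3 n : ℝ)
    (h0 : a0 = n*(v*(1-q1)*(1-q2)*(1-q3) + (1-v)*(1-e1)*(1-e2)*(1-e3)))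
    (h1 : a1 = n*(v*(1-q1)*(1-q2)*q3 + (1-v)*(1-e1)*(1-e2)*e3))
    (h2 : a2 = n*(v*(1-q1)*q2*(1-q3) + (1-v)*(1-e1)*e2*(1-e3)))
    (h3 : a3 = n*(v*(1-q1)*q2*q3 + (1-v)*(1-e1)*e2*e3))
    (h4 : a4 = n*(v*q1*(1-q2)*(1-q3) + (1-v)*e1*(1-e2)*(1-e3)))
    (h5 : a5 = n*(v*q1*(1-q2)*q3 + (1-v)*e1*(1-e2)*e3))
    (h6 : a6 = n*(v*q1*q2*(1-q3) + (1-v)*e1*e2*(1-e3)))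
    (h7 : a7 = n*(v*q1*q2*q3 + (1-v)*e1*e2*e3)) :
    (((a0+a4)*(a7+a3) - (a1+a5)*(a6+a2)) * e1^2 - (((a0+a4)*(a7+a3) - (a1+a5)*(a6+a2)) + (a4*a7 - a5*a6) - (a0*a3 - a1*a2)) * e1 + (a4*a7 - a5*a6) = 0) ∧
    (((a0+a4)*(a7+a3) - (a1+a5)*(a6+a2)) * q1^2 - (((a0+a4)*(a7+a3) - (a1+a5)*(a6+a2)) + (a4*a7 - a5*a6) - (a0*a3 - a1*a2)) * q1 + (a4*a7 - a5*a6) = 0) ∧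
    (((a0+a2)*(a7+a5) - (a4+a6)*(a3+a1)) * e2^2 - (((a0+a2)*(a7+a5) - (a4+a6)*(a3+a1)) + (a2*a7 - a3*a6) - (a0*a5 - a1*a4)) * e2 + (a2*a7 - a3*a6) = 0) ∧
    (((a0+a2)*(a7+a5) - (a4+a6)*(a3+a1)) * q2^2 - (((a0+a2)*(a7+a5) - (a4+a6)*(a3+a1)) + (a2*a7 - a3*a6) - (a0*a5 - a1*a4)) * q2 + (a2*a7 - a3*a6) = 0) ∧
    (((a0+a1)*(a7+a6) - (a2+a3)*(a5+a4)) * e3^2 - (((a0+a1)*(a7+a6) - (a2+a3)*(a5+a4)) + (a1*a7 - a3*a5) - (a0*a6 - a2*a4)) * e3 + (a1*a7 - a3*a5) = 0) ∧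
    (((a0+a1)*(a7+a6) - (a2+a3)*(a5+a4)) * q3^2 - (((a0+a1)*(a7+a6) - (a2+a3)*(a5+a4)) + (a1*a7 - a3*a5) - (a0*a6 - a2*a4)) * q3 + (a1*a7 - a3*a5) = 0) := by
  subst h0 h1 h2 h3 h4 h5 h6 h7
  refine ⟨by ring, by ring, by ring, by ring, by ring, by ring⟩
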